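/- arXiv:1506.04775 — 4 statements merged into one kernel-verified Lean document; each statement's English description precedes it below -/
import Mathlib

section
/- Let G ⊆ ℝⁿ be measurable and ν : G → (0,∞) measurable with ∫_G ν dx = 1. Let ℧ be a finite index set containing 0, let (φ_ℓ)_{ℓ∈℧} be functions G → ℂ orthonormal in L²(G, ν dx) with φ_0 ≡ 1, let Λ be a finite set with N = #Λ, and let Φ : G → ℂ^N be a measurable map satisfying the algebraic-closedness identity Φ(x)Φ(x)* = Σ_{ℓ∈℧} φ_ℓ(x) E_ℓ for all x ∈ G, where E_ℓ ∈ ℂ^{N×N} are fixed matrices with E_0 = I_N. Then for any Hermitian positive semidefinite S with Tr S = 1, the PDF p(x) := ν(x) Φ(x)* S Φ(x) satisfies ∫_G p(x)²/ν(x) dx = 1 + Σ_{ℓ∈℧\{0}} |⟨E_ℓ, S⟩|², where ⟨X, Y⟩ = Tr(X*Y); equivalently, the second-order relative Rényi entropy R(p‖ν) := ln ∫_G p²/ν dx equals ln(1 + Σ_{ℓ∈℧\{0}} |⟨E_ℓ, S⟩|²). -/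
open MeasureTheory Matrix ComplexOrder

/-- For an algebraically closed orthonormal family with
structure matrices `E ℓ` (where `φ ℓ₀ ≡ 1` and `E ℓ₀ = I`), the SDM-generated
PDF `p = ν Φ* S Φ` satisfies
`∫_G p²/ν dx = 1 + ∑_{ℓ ≠ ℓ₀} |⟨E ℓ, S⟩|²`, i.e. the second-order relative
Rényi entropy `R(p‖ν)` equals `ln(1 + ∑_{ℓ ≠ ℓ₀} |⟨E ℓ, S⟩|²)`. -/
theorem sdm_renyi_entropy {n : ℕ} {ι κ : Type*} [Fintype ι] [DecidableEq ι]
    [Fintype κ] [DecidableEq κ] (ℓ₀ : κ)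
    (G : Set (Fin n → ℝ)) (hG : MeasurableSet G)
    (ν : (Fin n → ℝ) → ℝ) (hνmeas : Measurable ν) (hνpos : ∀ x ∈ G, 0 < ν x)
    (hν1 : (∫ x in G, ν x) = 1)
    (φ : κ → (Fin n → ℝ) → ℂ) (hφmeas : ∀ ℓ, Measurable (φ ℓ))
    (hφ0 : ∀ x ∈ G, φ ℓ₀ x = 1)
    (horthint : ∀ ℓ m : κ, Integrable
      (fun x => (starRingEnd ℂ) (φ ℓ x) * φ m x * (ν x : ℂ)) (volume.restrict G))
    (horth : ∀ ℓ m : κ, (∫ x in G, (starRingEnd ℂ) (φ ℓ x) * φ m x * (ν x : ℂ))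
      = if ℓ = m then 1 else 0)
    (Φ : (Fin n → ℝ) → ι → ℂ) (hΦmeas : Measurable Φ)
    (E : κ → Matrix ι ι ℂ) (hE0 : E ℓ₀ = 1)
    (hclosed : ∀ x ∈ G, vecMulVec (Φ x) (star (Φ x)) = ∑ ℓ : κ, φ ℓ x • E ℓ)
    (S : Matrix ι ι ℂ) (hS : S.PosSemidef) (htr : S.trace = 1)
    (p : (Fin n → ℝ) → ℝ)
    (hp : ∀ x, p x = ν x * ((star (Φ x)) ⬝ᵥ S.mulVec (Φ x)).re)
    (hpint : Integrable (fun x => (p x) ^ 2 / ν x) (volume.restrict G)) :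
    (∫ x in G, (p x) ^ 2 / ν x)
      = 1 + ∑ ℓ ∈ Finset.univ.erase ℓ₀, ‖((E ℓ)ᴴ * S).trace‖ ^ 2 := by
  set c : κ → ℂ := fun ℓ => (E ℓ * S).trace with hc
  have key : ∀ x ∈ G, (star (Φ x)) ⬝ᵥ S.mulVec (Φ x) = ∑ ℓ : κ, φ ℓ x * c ℓ := by
    intro x hx
    have htr' : (vecMulVec (Φ x) (star (Φ x)) * S).trace
        = (star (Φ x)) ⬝ᵥ S.mulVec (Φ x) := by
      simp only [Matrix.trace, Matrix.diag, Matrix.mul_apply, Matrix.vecMulVec_apply,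
        dotProduct, Matrix.mulVec, Finset.mul_sum]
      rw [Finset.sum_comm]
      exact Finset.sum_congr rfl fun j _ => Finset.sum_congr rfl fun i _ => by ring
    rw [← htr', hclosed x hx, Finset.sum_mul, Matrix.trace_sum]
    simp [hc, Matrix.smul_mul, smul_eq_mul]
  have hreal : ∀ x, ((((star (Φ x)) ⬝ᵥ S.mulVec (Φ x)).re : ℂ))
      = (star (Φ x)) ⬝ᵥ S.mulVec (Φ x) := by
    intro x
    have h := hS.dotProduct_mulVec_nonneg (Φ x)
    rw [Complex.le_def] at h
    exact Complex.ext rfl (by simpa using h.2)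
  have hpt : Set.EqOn (fun x => (((p x) ^ 2 / ν x : ℝ) : ℂ))
      (fun x => ∑ ℓ : κ, ∑ m : κ, ((starRingEnd ℂ) (c ℓ) * c m) *
        ((starRingEnd ℂ) (φ ℓ x) * φ m x * (ν x : ℂ))) G := by
    intro x hx
    have hv' : (ν x : ℂ) ≠ 0 := by exact_mod_cast (hνpos x hx).ne'
    have hre := hreal x
    have hconjf : (starRingEnd ℂ) ((star (Φ x)) ⬝ᵥ S.mulVec (Φ x))
        = (star (Φ x)) ⬝ᵥ S.mulVec (Φ x) := by
      rw [← hre, Complex.conj_ofReal]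
    have h1 : ((p x : ℝ) : ℂ) = (ν x : ℂ) * ((star (Φ x)) ⬝ᵥ S.mulVec (Φ x)) := by
      rw [hp x]; push_cast; rw [hre]
    show (((p x) ^ 2 / ν x : ℝ) : ℂ) = _
    have h2 : (((p x) ^ 2 / ν x : ℝ) : ℂ) = (ν x : ℂ) *
        (((star (Φ x)) ⬝ᵥ S.mulVec (Φ x)) *
          (starRingEnd ℂ) ((star (Φ x)) ⬝ᵥ S.mulVec (Φ x))) := by
      rw [hconjf]
      push_cast
      rw [h1]
      field_simp
    rw [h2, key x hx, map_sum]
    simp only [_root_.map_mul]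
    rw [Finset.sum_mul_sum, Finset.mul_sum, Finset.sum_comm]
    refine Finset.sum_congr rfl fun ℓ _ => ?_
    rw [Finset.mul_sum]
    exact Finset.sum_congr rfl fun m _ => by ring
  have hci : (∫ x in G, (((p x) ^ 2 / ν x : ℝ) : ℂ))
      = ∑ ℓ : κ, (starRingEnd ℂ) (c ℓ) * c ℓ := by
    rw [setIntegral_congr_fun hG hpt]
    rw [integral_finset_sum _ fun ℓ _ => integrable_finset_sum _
      fun m _ => (horthint ℓ m).const_mul _]
    refine Finset.sum_congr rfl fun ℓ _ => ?_
    rw [integral_finset_sum _ fun m _ => (horthint ℓ m).const_mul _]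
    have : ∀ m : κ, (∫ x in G, ((starRingEnd ℂ) (c ℓ) * c m) *
        ((starRingEnd ℂ) (φ ℓ x) * φ m x * (ν x : ℂ)))
        = ((starRingEnd ℂ) (c ℓ) * c m) * if ℓ = m then 1 else 0 := by
      intro m
      rw [integral_const_mul, horth ℓ m]
    simp only [this, mul_ite, mul_one, mul_zero]
    simp
  have hcoe : (∫ x in G, (((p x) ^ 2 / ν x : ℝ) : ℂ))
      = ((∫ x in G, (p x) ^ 2 / ν x : ℝ) : ℂ) := integral_ofReal
  have hc0 : c ℓ₀ = 1 := by simp [hc, hE0, htr]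
  have hnorm : ∀ ℓ, (starRingEnd ℂ) (c ℓ) * c ℓ
      = ((‖((E ℓ)ᴴ * S).trace‖ ^ 2 : ℝ) : ℂ) := by
    intro ℓ
    have h3 : ((E ℓ)ᴴ * S).trace = (starRingEnd ℂ) (c ℓ) := by
      have h4 : (E ℓ)ᴴ * S = (Sᴴ * E ℓ)ᴴ := by simp [Matrix.conjTranspose_mul]
      rw [h4, Matrix.trace_conjTranspose, hS.1, Matrix.trace_mul_comm]
      rfl
    rw [h3, RCLike.norm_conj, Complex.sq_norm,
      Complex.normSq_eq_conj_mul_self]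
  have hfin : ((∫ x in G, (p x) ^ 2 / ν x : ℝ) : ℂ)
      = ((1 + ∑ ℓ ∈ Finset.univ.erase ℓ₀, ‖((E ℓ)ᴴ * S).trace‖ ^ 2 : ℝ) : ℂ) := by
    rw [← hcoe, hci, Finset.sum_congr rfl fun ℓ _ => hnorm ℓ]
    rw [← Finset.add_sum_erase _ _ (Finset.mem_univ ℓ₀)]
    have h0 : ‖((E ℓ₀)ᴴ * S).trace‖ ^ 2 = 1 := by simp [hE0, htr]
    rw [h0]
    push_cast
    ring
  exact_mod_cast hfin
end

section
/- Let G ⊆ ℝⁿ be measurable, ν : G → (0,∞) measurable with ∫_G ν dx = 1, and let (φ_k) be functions G → ℂ orthonormal in L²(G, ν dx), indexed so that Λ and ℧ are finite index sets with N = #Λ, L = #℧. Define Φ(x) = (φ_k(x))_{k∈Λ} and structure matrices E_ℓ := ∫_G conj(φ_ℓ(x)) Φ(x)Φ(x)* ν(x) dx for ℓ ∈ ℧, and assume E_ℓ ≠ 0 for each ℓ ∈ ℧. Let H_Λ := span{φ_k : k ∈ Λ}, H_℧ := span{φ_ℓ : ℓ ∈ ℧}, and Q_Λ := { f·conj(g)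 : f, g ∈ H_Λ }. Then the matrices (E_ℓ)_{ℓ∈℧} are linearly independent in ℂ^{N×N} (equivalently, the subspace span{E_ℓ : ℓ ∈ ℧} has full dimension L) if and only if the only function h ∈ H_℧ satisfying ∫_G f(x) conj(g(x)) conj(h(x)) ν(x) dx = 0 for all f, g ∈ H_Λ is h = 0, i.e. Q_Λ^⊥ ∩ H_℧ = {0} where the orthogonal complement is taken in L²(G, ν dx). -/
open MeasureTheory Matrix

/-- (Lemma 2 of the paper.) The structure matrices
`E ℓ = ∫_G conj(φ℧ ℓ) Φ Φ* ν dx`, all nonzero, are linearly independent (so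
that `span{E ℓ}` has full dimension `L = #℧`) if and only if the only
`h ∈ H_℧` orthogonal in `L²(G, ν dx)` to all products `f · conj(g)` with
`f, g ∈ H_Λ` is `h = 0`, i.e. `Q_Λ^⊥ ∩ H_℧ = {0}`. -/
theorem sdm_structure_matrices_linearIndependent_iff {n : ℕ} {ι κ : Type*}
    [Fintype ι] [DecidableEq ι] [Fintype κ] [DecidableEq κ]
    (G : Set (Fin n → ℝ)) (hG : MeasurableSet G)
    (ν : (Fin n → ℝ) → ℝ) (hνmeas : Measurable ν) (hνpos : ∀ x ∈ G, 0 < ν x)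
    (hν1 : (∫ x in G, ν x) = 1)
    (φΛ : ι → (Fin n → ℝ) → ℂ) (φ℧ : κ → (Fin n → ℝ) → ℂ)
    (hφΛmeas : ∀ k, Measurable (φΛ k)) (hφ℧meas : ∀ ℓ, Measurable (φ℧ ℓ))
    (horthint : ∀ ℓ m : κ, Integrable
      (fun x => (starRingEnd ℂ) (φ℧ ℓ x) * φ℧ m x * (ν x : ℂ)) (volume.restrict G))
    (horth : ∀ ℓ m : κ, (∫ x in G, (starRingEnd ℂ) (φ℧ ℓ x) * φ℧ m x * (ν x : ℂ))
      = if ℓ = m then 1 else 0)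
    (htripint : ∀ (ℓ : κ) (j k : ι), Integrable
      (fun x => φΛ j x * (starRingEnd ℂ) (φΛ k x) * (starRingEnd ℂ) (φ℧ ℓ x) * (ν x : ℂ))
      (volume.restrict G))
    (E : κ → Matrix ι ι ℂ)
    (hE : ∀ (ℓ : κ) (j k : ι), E ℓ j k =
      ∫ x in G, (starRingEnd ℂ) (φ℧ ℓ x) * (φΛ j x * (starRingEnd ℂ) (φΛ k x)) * (ν x : ℂ))
    (hEne : ∀ ℓ : κ, E ℓ ≠ 0) :
    LinearIndependent ℂ E ↔
      ∀ h ∈ Submodule.span ℂ (Set.range φ℧),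
        (∀ f ∈ Submodule.span ℂ (Set.range φΛ), ∀ g ∈ Submodule.span ℂ (Set.range φΛ),
          (∫ x in G, f x * (starRingEnd ℂ) (g x) * (starRingEnd ℂ) (h x) * (ν x : ℂ)) = 0)
        → h = 0 := by
  classical
  -- key computation A
  have keyA : ∀ (c : κ → ℂ) (j k : ι),
      (∫ x in G, φΛ j x * (starRingEnd ℂ) (φΛ k x) *
        (starRingEnd ℂ) (∑ ℓ, c ℓ * φ℧ ℓ x) * (ν x : ℂ)) =
      ∑ ℓ, (starRingEnd ℂ) (c ℓ) * E ℓ j k := by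
    intro c j k
    have h1 : (fun x => φΛ j x * (starRingEnd ℂ) (φΛ k x) *
        (starRingEnd ℂ) (∑ ℓ, c ℓ * φ℧ ℓ x) * (ν x : ℂ)) =
        fun x => ∑ ℓ, (starRingEnd ℂ) (c ℓ) *
          (φΛ j x * (starRingEnd ℂ) (φΛ k x) * (starRingEnd ℂ) (φ℧ ℓ x) * (ν x : ℂ)) := by
      funext x
      simp only [map_sum, _root_.map_mul, Finset.mul_sum, Finset.sum_mul]
      exact Finset.sum_congr rfl fun ℓ _ => by ring
    rw [h1, integral_finset_sum _ (fun ℓ _ => (htripint ℓ j k).const_mul _)]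
    refine Finset.sum_congr rfl fun ℓ _ => ?_
    rw [integral_const_mul, hE]
    congr 1
    refine integral_congr_ae (Filter.Eventually.of_forall fun x => ?_)
    ring
  -- key computation B
  have keyB : ∀ (c : κ → ℂ) (m : κ),
      (∫ x in G, (starRingEnd ℂ) (φ℧ m x) * (∑ ℓ, c ℓ * φ℧ ℓ x) * (ν x : ℂ)) = c m := by
    intro c m
    have h1 : (fun x => (starRingEnd ℂ) (φ℧ m x) * (∑ ℓ, c ℓ * φ℧ ℓ x) * (ν x : ℂ)) =
        fun x => ∑ ℓ, c ℓ * ((starRingEnd ℂ) (φ℧ m x) * φ℧ ℓ x * (ν x : ℂ)) := by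
      funext x
      simp only [Finset.mul_sum, Finset.sum_mul]
      exact Finset.sum_congr rfl fun ℓ _ => by ring
    rw [h1, integral_finset_sum _ (fun ℓ _ => (horthint m ℓ).const_mul _)]
    simp only [integral_const_mul, horth]
    simp
  constructor
  · intro hLI h hmem hperp
    obtain ⟨c, hc⟩ := (Submodule.mem_span_range_iff_exists_fun ℂ).1 hmem
    have hcx : ∀ x, h x = ∑ ℓ, c ℓ * φ℧ ℓ x := by
      intro x
      rw [← hc]
      simp [Finset.sum_apply]
    have hmat : (∑ ℓ, (starRingEnd ℂ) (c ℓ) • E ℓ) = 0 := by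
      ext j k
      have h0 := hperp (φΛ j) (Submodule.subset_span ⟨j, rfl⟩)
        (φΛ k) (Submodule.subset_span ⟨k, rfl⟩)
      have hfun : (fun x => φΛ j x * (starRingEnd ℂ) (φΛ k x) *
          (starRingEnd ℂ) (h x) * (ν x : ℂ)) =
          fun x => φΛ j x * (starRingEnd ℂ) (φΛ k x) *
          (starRingEnd ℂ) (∑ ℓ, c ℓ * φ℧ ℓ x) * (ν x : ℂ) := by
        funext x; rw [hcx x]
      rw [hfun, keyA] at h0
      simpa [Matrix.sum_apply] using h0
    have hz := Fintype.linearIndependent_iff.1 hLI _ hmat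
    have hc0 : ∀ ℓ, c ℓ = 0 := by
      intro ℓ
      have := hz ℓ
      simpa using congrArg (starRingEnd ℂ) this
    funext x
    rw [hcx x]
    simp [hc0]
  · intro H
    rw [Fintype.linearIndependent_iff]
    intro d hd
    set c : κ → ℂ := fun ℓ => (starRingEnd ℂ) (d ℓ) with hcdef
    set h : (Fin n → ℝ) → ℂ := fun x => ∑ ℓ, c ℓ * φ℧ ℓ x with hhdef
    have hmem : h ∈ Submodule.span ℂ (Set.range φ℧) := by
      refine (Submodule.mem_span_range_iff_exists_fun ℂ).2 ⟨c, ?_⟩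
      funext x
      simp [hhdef, Finset.sum_apply]
    have hperp : ∀ f ∈ Submodule.span ℂ (Set.range φΛ),
        ∀ g ∈ Submodule.span ℂ (Set.range φΛ),
        (∫ x in G, f x * (starRingEnd ℂ) (g x) * (starRingEnd ℂ) (h x) * (ν x : ℂ)) = 0 := by
      intro f hf g hg
      obtain ⟨a, ha⟩ := (Submodule.mem_span_range_iff_exists_fun ℂ).1 hf
      obtain ⟨b, hb⟩ := (Submodule.mem_span_range_iff_exists_fun ℂ).1 hg
      have hax : ∀ x, f x = ∑ j, a j * φΛ j x := by
        intro x; rw [← ha]; simp [Finset.sum_apply]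
      have hbx : ∀ x, g x = ∑ k, b k * φΛ k x := by
        intro x; rw [← hb]; simp [Finset.sum_apply]
      have hint : ∀ j k : ι, Integrable (fun x => φΛ j x * (starRingEnd ℂ) (φΛ k x) *
          (starRingEnd ℂ) (h x) * (ν x : ℂ)) (volume.restrict G) := by
        intro j k
        have h1 : (fun x => φΛ j x * (starRingEnd ℂ) (φΛ k x) *
            (starRingEnd ℂ) (h x) * (ν x : ℂ)) =
            fun x => ∑ ℓ, (starRingEnd ℂ) (c ℓ) *
              (φΛ j x * (starRingEnd ℂ) (φΛ k x) * (starRingEnd ℂ) (φ℧ ℓ x) * (ν x : ℂ)) := by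
          funext x
          simp only [hhdef, map_sum, _root_.map_mul, Finset.mul_sum, Finset.sum_mul]
          exact Finset.sum_congr rfl fun ℓ _ => by ring
        rw [h1]
        exact integrable_finset_sum _ (fun ℓ _ => (htripint ℓ j k).const_mul _)
      have hsplit : (fun x => f x * (starRingEnd ℂ) (g x) * (starRingEnd ℂ) (h x) * (ν x : ℂ)) =
          fun x => ∑ j, ∑ k, (a j * (starRingEnd ℂ) (b k)) *
            (φΛ j x * (starRingEnd ℂ) (φΛ k x) * (starRingEnd ℂ) (h x) * (ν x : ℂ)) := by
        funext x
        rw [hax x, hbx x]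
        simp only [map_sum, _root_.map_mul, Finset.mul_sum, Finset.sum_mul]
        rw [Finset.sum_comm]
        refine Finset.sum_congr rfl fun j _ => Finset.sum_congr rfl fun k _ => by ring
      rw [hsplit, integral_finset_sum _
        (fun j _ => integrable_finset_sum _ (fun k _ => (hint j k).const_mul _))]
      have hjk : ∀ j k : ι, (∫ x in G, φΛ j x * (starRingEnd ℂ) (φΛ k x) *
          (starRingEnd ℂ) (h x) * (ν x : ℂ)) = 0 := by
        intro j k
        have := keyA c j k
        have hEq : (∑ ℓ, d ℓ • E ℓ) j k = 0 := by rw [hd]; rfl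
        rw [Matrix.sum_apply] at hEq
        simp only [Matrix.smul_apply, smul_eq_mul] at hEq
        calc (∫ x in G, φΛ j x * (starRingEnd ℂ) (φΛ k x) *
            (starRingEnd ℂ) (h x) * (ν x : ℂ))
            = ∑ ℓ, (starRingEnd ℂ) (c ℓ) * E ℓ j k := this
          _ = ∑ ℓ, d ℓ * E ℓ j k := by
              refine Finset.sum_congr rfl fun ℓ _ => by simp [hcdef]
          _ = 0 := hEq
      refine Finset.sum_eq_zero fun j _ => ?_
      rw [integral_finset_sum _ (fun k _ => (hint j k).const_mul _)]
      refine Finset.sum_eq_zero fun k _ => ?_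
      rw [integral_const_mul, hjk j k, mul_zero]
    have hz := H h hmem hperp
    intro m
    have hx0 : ∀ x, (∑ ℓ, c ℓ * φ℧ ℓ x) = 0 := fun x => congrFun hz x
    have hcm : c m = 0 := by
      rw [← keyB c m]
      have hfun : (fun x => (starRingEnd ℂ) (φ℧ m x) * (∑ ℓ, c ℓ * φ℧ ℓ x) * (ν x : ℂ))
          = fun _ => (0 : ℂ) := by
        funext x; rw [hx0 x, mul_zero, zero_mul]
      rw [hfun, integral_zero]
    have := congrArg (starRingEnd ℂ) hcm
    simpa [hcdef] using this
end

section
/- Let N ≥ 1, μ > 0, and let 𝒜 be a positive semidefinite self-adjoint linear operator on the Hermitian N×N matrices. For Hermitian positive definite S let F_S(X) := 𝒜(X) + μ S^{-1} X S^{-1}. Suppose S : [0,T] → ℂ^{N×N} is a differentiable matrix-valued function with S(t) Hermitian positive definite and Tr S(t) = 1 for all t, λ : [0,T] → ℝ is differentiable, and B : [0,T] → ℂ^{N×N} is a differentiable Hermitian-valued function with derivative Ḃ(t) = K(t), such that the stationarity equation 𝒜(S(t)) − μ S(t)^{-1} = λ(t) I_N + B(t) holds for all t ∈ [0,T]. Then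 S satisfies the ordinary differential equation Ṡ(t) = F_{S(t)}^{-1}(K(t)) − (Tr F_{S(t)}^{-1}(K(t)) / Tr F_{S(t)}^{-1}(I_N)) · F_{S(t)}^{-1}(I_N). -/
open Matrix ComplexOrder Set

attribute [local instance] Matrix.normedAddCommGroup Matrix.normedSpace

namespace SdmAux

variable {N : ℕ}

lemma hasDerivWithinAt_matrix {f : ℝ → Matrix (Fin N) (Fin N) ℂ}
    {f' : Matrix (Fin N) (Fin N) ℂ} {s : Set ℝ} {t : ℝ} :
    HasDerivWithinAt f f' s t ↔
      ∀ j k, HasDerivWithinAt (fun x => f x j k) (f' j k) s t := by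
  constructor
  · intro h j k
    exact hasDerivWithinAt_pi.1 (hasDerivWithinAt_pi.1 h j) k
  · intro h
    exact hasDerivWithinAt_pi.2 fun j => hasDerivWithinAt_pi.2 fun k => h j k

lemma matmul {f g : ℝ → Matrix (Fin N) (Fin N) ℂ}
    {f' g' : Matrix (Fin N) (Fin N) ℂ} {s : Set ℝ} {t : ℝ}
    (hf : HasDerivWithinAt f f' s t) (hg : HasDerivWithinAt g g' s t) :
    HasDerivWithinAt (fun x => f x * g x) (f' * g t + f t * g') s t := by
  rw [hasDerivWithinAt_matrix] at hf hg ⊢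
  intro j k
  simp only [Matrix.mul_apply, Matrix.add_apply]
  rw [← Finset.sum_add_distrib]
  exact HasDerivWithinAt.fun_sum fun i _ => (hf j i).mul (hg i k)

lemma ofReal_smul_mat (r : ℝ) (M : Matrix (Fin N) (Fin N) ℂ) :
    (r : ℂ) • M = r • M := by
  ext j k
  simp [Matrix.smul_apply, Complex.real_smul]

end SdmAux
/-- The operator `F_S(X) = 𝒜(X) + μ S⁻¹ X S⁻¹`. -/
noncomputable def Fop {N : ℕ}
    (A : Matrix (Fin N) (Fin N) ℂ →ₗ[ℝ] Matrix (Fin N) (Fin N) ℂ)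
    (μ : ℝ) (S X : Matrix (Fin N) (Fin N) ℂ) : Matrix (Fin N) (Fin N) ℂ :=
  A X + (μ : ℂ) • (S⁻¹ * X * S⁻¹)

namespace SdmAux

lemma trace_conj_self_re (W : Matrix (Fin N) (Fin N) ℂ) :
    ((Wᴴ * W).trace).re = ∑ j, ∑ i, Complex.normSq (W i j) := by
  have h : (Wᴴ * W).trace = ∑ j, ∑ i, ((Complex.normSq (W i j) : ℝ) : ℂ) := by
    simp only [Matrix.trace, Matrix.diag, Matrix.mul_apply, Matrix.conjTranspose_apply]
    congr 1; ext j; congr 1; ext i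
    rw [Complex.normSq_eq_conj_mul_self]; rfl
  rw [h]
  push_cast [Complex.re_sum]
  simp

lemma trace_conj_self_nonneg (W : Matrix (Fin N) (Fin N) ℂ) :
    0 ≤ ((Wᴴ * W).trace).re := by
  rw [trace_conj_self_re]
  exact Finset.sum_nonneg fun j _ => Finset.sum_nonneg fun i _ => Complex.normSq_nonneg _

lemma eq_zero_of_trace_conj_self (W : Matrix (Fin N) (Fin N) ℂ)
    (h : ((Wᴴ * W).trace).re = 0) : W = 0 := by
  rw [trace_conj_self_re] at h
  ext i j
  have h1 : ∀ j ∈ Finset.univ, (0:ℝ) ≤ ∑ i, Complex.normSq (W i j) := by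
    intro j _
    exact Finset.sum_nonneg fun i _ => Complex.normSq_nonneg _
  have h2 := (Finset.sum_eq_zero_iff_of_nonneg h1).1 h j (Finset.mem_univ j)
  have h3 : ∀ i ∈ Finset.univ, (0:ℝ) ≤ Complex.normSq (W i j) := by
    intro i _; exact Complex.normSq_nonneg _
  have h4 := (Finset.sum_eq_zero_iff_of_nonneg h3).1 h2 i (Finset.mem_univ i)
  simpa using Complex.normSq_eq_zero.1 h4

end SdmAux
namespace SdmAux

open scoped MatrixOrder in
lemma quad_trace_eq {St Z : Matrix (Fin N) (Fin N) ℂ} (hSt : St.PosDef)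
    (hZ : Z.IsHermitian) :
    ∃ W : Matrix (Fin N) (Fin N) ℂ, Wᴴ = W ∧
      (Z * (St⁻¹ * Z * St⁻¹)).trace = (Wᴴ * W).trace ∧
      (W = 0 → Z = 0) := by
  have hP : (St⁻¹).PosDef := hSt.inv
  set Q := CFC.sqrt (St⁻¹) with hQdef
  have hQh : Qᴴ = Q := (CFC.sqrt_nonneg (St⁻¹)).posSemidef.1
  have hQQ : Q * Q = St⁻¹ := CFC.sqrt_mul_sqrt_self _ hP.posSemidef.nonneg
  refine ⟨Q * Z * Q, ?_, ?_, ?_⟩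
  · simp [Matrix.conjTranspose_mul, hQh, hZ.eq, Matrix.mul_assoc]
  · rw [show (Q * Z * Q)ᴴ = Q * Z * Q by
      simp [Matrix.conjTranspose_mul, hQh, hZ.eq, Matrix.mul_assoc]]
    have e1 : Z * (St⁻¹ * Z * St⁻¹) = (Z * (Q * Q) * Z * Q) * Q := by
      rw [← hQQ]; simp only [Matrix.mul_assoc]
    rw [e1, Matrix.trace_mul_comm]
    congr 1
    simp only [Matrix.mul_assoc]
  · intro hW0
    have hdet : Q.det ≠ 0 := by
      intro h
      have : (St⁻¹).det = 0 := by rw [← hQQ, Matrix.det_mul, h, mul_zero]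
      exact (hP.det_pos.ne' this).elim
    have hQu : IsUnit Q.det := Ne.isUnit hdet
    have : Q⁻¹ * (Q * Z * Q) * Q⁻¹ = Z := by
      rw [show Q⁻¹ * (Q * Z * Q) * Q⁻¹ = (Q⁻¹ * Q) * Z * (Q * Q⁻¹) by
        simp only [Matrix.mul_assoc]]
      rw [Matrix.nonsing_inv_mul Q hQu, Matrix.mul_nonsing_inv Q hQu,
        Matrix.one_mul, Matrix.mul_one]
    rw [← this, hW0]
    simp

lemma herm_quad_pos
    (A : Matrix (Fin N) (Fin N) ℂ →ₗ[ℝ] Matrix (Fin N) (Fin N) ℂ)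
    (hApsd : ∀ X : Matrix (Fin N) (Fin N) ℂ, X.IsHermitian → 0 ≤ ((X * A X).trace).re)
    {μ : ℝ} (hμ : 0 < μ) {St : Matrix (Fin N) (Fin N) ℂ} (hSt : St.PosDef)
    {Z : Matrix (Fin N) (Fin N) ℂ} (hZ : Z.IsHermitian) :
    0 ≤ ((Z * Fop A μ St Z).trace).re ∧
      (((Z * Fop A μ St Z).trace).re = 0 → Z = 0) := by
  obtain ⟨W, hWh, hWtr, hW0⟩ := quad_trace_eq hSt hZ
  have hexp : ((Z * Fop A μ St Z).trace).re
      = ((Z * A Z).trace).re + μ * ((Wᴴ * W).trace).re := by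
    rw [Fop, Matrix.mul_add, Matrix.trace_add, Matrix.mul_smul, Matrix.trace_smul,
      ← hWtr]
    simp [Complex.add_re, Complex.smul_re]
  have h1 := hApsd Z hZ
  have h2 := trace_conj_self_nonneg W
  constructor
  · rw [hexp]; nlinarith
  · intro h0
    rw [hexp] at h0
    have hq : ((Wᴴ * W).trace).re = 0 := by nlinarith
    exact hW0 (eq_zero_of_trace_conj_self W hq)

end SdmAux

namespace SdmAux

lemma Fop_sub {N : ℕ} (A : Matrix (Fin N) (Fin N) ℂ →ₗ[ℝ] Matrix (Fin N) (Fin N) ℂ)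
    (μ : ℝ) (St X Y : Matrix (Fin N) (Fin N) ℂ) :
    Fop A μ St (X - Y) = Fop A μ St X - Fop A μ St Y := by
  simp only [Fop, map_sub, Matrix.mul_sub, Matrix.sub_mul, smul_sub]
  abel

lemma Fop_smul {N : ℕ} (A : Matrix (Fin N) (Fin N) ℂ →ₗ[ℝ] Matrix (Fin N) (Fin N) ℂ)
    (μ : ℝ) (St : Matrix (Fin N) (Fin N) ℂ) (c : ℝ) (X : Matrix (Fin N) (Fin N) ℂ) :
    Fop A μ St (c • X) = c • Fop A μ St X := by
  simp only [Fop, LinearMap.map_smul, Matrix.mul_smul, Matrix.smul_mul, smul_add]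
  rw [smul_comm]

lemma Fop_zero {N : ℕ} (A : Matrix (Fin N) (Fin N) ℂ →ₗ[ℝ] Matrix (Fin N) (Fin N) ℂ)
    (μ : ℝ) (St : Matrix (Fin N) (Fin N) ℂ) :
    Fop A μ St 0 = 0 := by
  simp [Fop]

end SdmAux

open SdmAux in
/-- (Theorem 2 of the paper, abstract form.) Suppose the
stationarity equation `𝒜(S(t)) - μ S(t)⁻¹ = λ(t) I + B(t)` holds on `[0,T]`
for a differentiable family `S(t)` of Hermitian positive definite matrices of
unit trace, a differentiable `λ`, and a differentiable Hermitian family `B`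
with derivative `K`.  Then `S` obeys the ODE
`Ṡ = F_S⁻¹(K) - (Tr F_S⁻¹(K) / Tr F_S⁻¹(I)) F_S⁻¹(I)`,
where `F_S(X) = 𝒜(X) + μ S⁻¹ X S⁻¹` (here `X = F_S⁻¹(K)`, `Y = F_S⁻¹(I)`). -/
theorem sdm_dynamics_ode {N : ℕ} (hN : 1 ≤ N)
    (A : Matrix (Fin N) (Fin N) ℂ →ₗ[ℝ] Matrix (Fin N) (Fin N) ℂ)
    (hAherm : ∀ X : Matrix (Fin N) (Fin N) ℂ, X.IsHermitian → (A X).IsHermitian)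
    (hAsa : ∀ X Y : Matrix (Fin N) (Fin N) ℂ, X.IsHermitian → Y.IsHermitian →
      (X * A Y).trace = (A X * Y).trace)
    (hApsd : ∀ X : Matrix (Fin N) (Fin N) ℂ, X.IsHermitian → 0 ≤ ((X * A X).trace).re)
    (μ : ℝ) (hμ : 0 < μ) (T : ℝ) (hT : 0 < T)
    (S S' : ℝ → Matrix (Fin N) (Fin N) ℂ)
    (hSderiv : ∀ t ∈ Icc (0 : ℝ) T, ∀ j k : Fin N,
      HasDerivWithinAt (fun s => S s j k) (S' t j k) (Icc (0 : ℝ) T) t)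
    (hSpd : ∀ t ∈ Icc (0 : ℝ) T, (S t).PosDef)
    (hStr : ∀ t ∈ Icc (0 : ℝ) T, (S t).trace = 1)
    (lam lam' : ℝ → ℝ)
    (hlam : ∀ t ∈ Icc (0 : ℝ) T, HasDerivWithinAt lam (lam' t) (Icc (0 : ℝ) T) t)
    (B K : ℝ → Matrix (Fin N) (Fin N) ℂ)
    (hBherm : ∀ t ∈ Icc (0 : ℝ) T, (B t).IsHermitian)
    (hBderiv : ∀ t ∈ Icc (0 : ℝ) T, ∀ j k : Fin N,
      HasDerivWithinAt (fun s => B s j k) (K t j k) (Icc (0 : ℝ) T) t)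
    (hstat : ∀ t ∈ Icc (0 : ℝ) T,
      A (S t) - (μ : ℂ) • (S t)⁻¹
        = ((lam t : ℝ) : ℂ) • (1 : Matrix (Fin N) (Fin N) ℂ) + B t) :
    ∀ t ∈ Icc (0 : ℝ) T, ∀ X Y : Matrix (Fin N) (Fin N) ℂ,
      X.IsHermitian → Fop A μ (S t) X = K t →
      Y.IsHermitian → Fop A μ (S t) Y = 1 →
      S' t = X - ((X.trace.re / Y.trace.re : ℝ) : ℂ) • Y := by
  intro t ht X Y hX hFX hY hFY
  have hUD : UniqueDiffWithinAt ℝ (Icc (0 : ℝ) T) t := uniqueDiffOn_Icc hT t ht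
  have hSt : (S t).PosDef := hSpd t ht
  have hdetS : IsUnit (S t).det := (Matrix.isUnit_iff_isUnit_det _).1 hSt.isUnit
  have hS : HasDerivWithinAt S (S' t) (Icc (0 : ℝ) T) t :=
    hasDerivWithinAt_matrix.2 (hSderiv t ht)
  have hB : HasDerivWithinAt B (K t) (Icc (0 : ℝ) T) t :=
    hasDerivWithinAt_matrix.2 (hBderiv t ht)
  have hASd : HasDerivWithinAt (fun s => A (S s)) (A (S' t)) (Icc (0 : ℝ) T) t :=
    (LinearMap.toContinuousLinearMap A).hasFDerivAt.comp_hasDerivWithinAt t hS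
  have hlamC : HasDerivWithinAt (fun s => ((lam s : ℝ) : ℂ)) ((lam' t : ℝ) : ℂ)
      (Icc (0 : ℝ) T) t :=
    Complex.ofRealCLM.hasFDerivAt.comp_hasDerivWithinAt t (hlam t ht)
  have hlam1 : HasDerivWithinAt
      (fun s => ((lam s : ℝ) : ℂ) • (1 : Matrix (Fin N) (Fin N) ℂ))
      (((lam' t : ℝ) : ℂ) • (1 : Matrix (Fin N) (Fin N) ℂ)) (Icc (0 : ℝ) T) t :=
    hlamC.smul_const 1
  have hRHS : HasDerivWithinAt
      (fun s => A (S s) - ((lam s : ℝ) : ℂ) • (1 : Matrix (Fin N) (Fin N) ℂ) - B s)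
      (A (S' t) - ((lam' t : ℝ) : ℂ) • (1 : Matrix (Fin N) (Fin N) ℂ) - K t)
      (Icc (0 : ℝ) T) t := (hASd.sub hlam1).sub hB
  have hG : HasDerivWithinAt
      (fun s => S s * (A (S s) - ((lam s : ℝ) : ℂ) • 1 - B s))
      (S' t * (A (S t) - ((lam t : ℝ) : ℂ) • 1 - B t)
        + S t * (A (S' t) - ((lam' t : ℝ) : ℂ) • 1 - K t)) (Icc (0 : ℝ) T) t :=
    SdmAux.matmul hS hRHS
  have hstat' : ∀ s ∈ Icc (0 : ℝ) T,
      A (S s) - ((lam s : ℝ) : ℂ) • (1 : Matrix (Fin N) (Fin N) ℂ) - B s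
        = (μ : ℂ) • (S s)⁻¹ := by
    intro s hs
    have h := hstat s hs
    have h2 : A (S s) = (μ : ℂ) • (S s)⁻¹ + (((lam s : ℝ) : ℂ) • 1 + B s) := by
      rw [← h]; abel
    rw [h2]; abel
  have hGconst : HasDerivWithinAt
      (fun s => S s * (A (S s) - ((lam s : ℝ) : ℂ) • 1 - B s))
      0 (Icc (0 : ℝ) T) t := by
    have heq : ∀ s ∈ Icc (0 : ℝ) T,
        S s * (A (S s) - ((lam s : ℝ) : ℂ) • 1 - B s)
          = (μ : ℂ) • (1 : Matrix (Fin N) (Fin N) ℂ) := by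
      intro s hs
      rw [hstat' s hs, Matrix.mul_smul,
        Matrix.mul_nonsing_inv _ ((Matrix.isUnit_iff_isUnit_det _).1 (hSpd s hs).isUnit)]
    exact (hasDerivWithinAt_const t _ ((μ : ℂ) • (1 : Matrix (Fin N) (Fin N) ℂ))).congr
      heq (heq t ht)
  have hkey : S' t * ((μ : ℂ) • (S t)⁻¹)
      + S t * (A (S' t) - ((lam' t : ℝ) : ℂ) • 1 - K t) = 0 := by
    have h0 := hUD.eq_deriv _ hG hGconst
    rw [hstat' t ht] at h0
    exact h0
  have hFop : Fop A μ (S t) (S' t) = ((lam' t : ℝ) : ℂ) • 1 + K t := by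
    have h2 : (S t)⁻¹ * (S' t * ((μ : ℂ) • (S t)⁻¹)
        + S t * (A (S' t) - ((lam' t : ℝ) : ℂ) • 1 - K t)) = 0 := by
      rw [hkey, Matrix.mul_zero]
    rw [Matrix.mul_add] at h2
    rw [show (S t)⁻¹ * (S t * (A (S' t) - ((lam' t : ℝ) : ℂ) • 1 - K t))
        = A (S' t) - ((lam' t : ℝ) : ℂ) • 1 - K t by
      rw [← Matrix.mul_assoc, Matrix.nonsing_inv_mul _ hdetS, Matrix.one_mul]] at h2
    rw [show (S t)⁻¹ * (S' t * ((μ : ℂ) • (S t)⁻¹))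
        = (μ : ℂ) • ((S t)⁻¹ * S' t * (S t)⁻¹) by
      rw [Matrix.mul_smul, Matrix.mul_smul, Matrix.mul_assoc]] at h2
    have h3 : Fop A μ (S t) (S' t) - (((lam' t : ℝ) : ℂ) • 1 + K t) = 0 := by
      rw [Fop, ← h2]; abel
    exact sub_eq_zero.1 h3
  -- S' t is Hermitian
  have hS'h : (S' t).IsHermitian := by
    rw [Matrix.IsHermitian]
    ext j k
    rw [Matrix.conjTranspose_apply]
    have h1 := hSderiv t ht j k
    have h3 : HasDerivWithinAt (fun s => star (S s k j)) (star (S' t k j))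
        (Icc (0 : ℝ) T) t :=
      Complex.conjCLE.toContinuousLinearMap.hasFDerivAt.comp_hasDerivWithinAt t
        (hSderiv t ht k j)
    have h2 : HasDerivWithinAt (fun s => S s j k) (star (S' t k j))
        (Icc (0 : ℝ) T) t := by
      apply h3.congr (fun s hs => ((hSpd s hs).isHermitian.apply j k).symm)
        (((hSpd t ht).isHermitian.apply j k).symm)
    exact hUD.eq_deriv _ h2 h1
  -- trace of S' t vanishes
  have htrS : HasDerivWithinAt (fun s => (S s).trace) ((S' t).trace)
      (Icc (0 : ℝ) T) t := by
    simp only [Matrix.trace, Matrix.diag]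
    exact HasDerivWithinAt.fun_sum fun j _ => hSderiv t ht j j
  have htrS0 : (S' t).trace = 0 :=
    hUD.eq_deriv _ htrS ((hasDerivWithinAt_const t _ (1 : ℂ)).congr
      (fun s hs => hStr s hs) (hStr t ht))
  -- the difference Z
  set c := lam' t with hcdef
  set Z := S' t - X - c • Y with hZdef
  have hcY : (c • Y).IsHermitian := by
    rw [Matrix.IsHermitian, Matrix.conjTranspose_smul, star_trivial, hY.eq]
  have hZh : Z.IsHermitian := (hS'h.sub hX).sub hcY
  have hFZ : Fop A μ (S t) Z = 0 := by
    rw [hZdef, Fop_sub, Fop_sub, Fop_smul, hFop, hFX, hFY,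
      SdmAux.ofReal_smul_mat c (1 : Matrix (Fin N) (Fin N) ℂ)]
    rw [add_sub_cancel_right, sub_self]
  have hZ0 : Z = 0 := (herm_quad_pos A hApsd hμ hSt hZh).2
    (by rw [hFZ, Matrix.mul_zero, Matrix.trace_zero, Complex.zero_re])
  have hS'eq : S' t = X + c • Y := by
    have h4 : S' t - (X + c • Y) = 0 := by
      rw [sub_add_eq_sub_sub]; exact hZ0
    exact sub_eq_zero.1 h4
  -- positivity of trace Y
  have htrYreal := herm_quad_pos A hApsd hμ hSt hY
  have htrYeq : (Y * Fop A μ (S t) Y).trace = Y.trace := by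
    rw [hFY, Matrix.mul_one]
  have hone : (1 : Matrix (Fin N) (Fin N) ℂ) ≠ 0 := by
    intro h
    have := congrFun (congrFun h ⟨0, hN⟩) ⟨0, hN⟩
    simp [Matrix.one_apply_eq] at this
  have htrYpos : 0 < Y.trace.re := by
    rcases lt_or_eq_of_le htrYreal.1 with h | h
    · rwa [htrYeq] at h
    · exfalso
      have hY0 : Y = 0 := htrYreal.2 h.symm
      rw [hY0, Fop_zero] at hFY
      exact hone hFY.symm
  -- the trace identity
  have htr2 : X.trace.re + c * Y.trace.re = 0 := by
    have h5 : (S' t).trace = X.trace + c • Y.trace := by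
      rw [hS'eq, Matrix.trace_add, Matrix.trace_smul]
    rw [htrS0] at h5
    have h6 := congrArg Complex.re h5.symm
    rw [Complex.add_re, Complex.zero_re, Complex.real_smul, Complex.re_ofReal_mul] at h6
    linarith
  have hc : c = -(X.trace.re / Y.trace.re) := by
    field_simp
    linarith
  rw [hS'eq, hc, SdmAux.ofReal_smul_mat, neg_smul, ← sub_eq_add_neg]
end

section
/- Let n ≥ 1 and let g : ℝⁿ → ℝ be a continuously differentiable function that is 2π-periodic in each coordinate and has zero mean: ∫_{[0,2π)ⁿ} g(x) dx = 0. Then ∫_{[0,2π)ⁿ} |∇g(x)|² dx ≥ ∫_{[0,2π)ⁿ} g(x)² dx (the Poincaré–Wirtinger inequality on the n-dimensional torus, with constant 1). -/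
open MeasureTheory Real Set

/-- The fundamental domain `[0, 2π)ⁿ` of the `n`-dimensional torus. -/
def torusBox (n : ℕ) : Set (Fin n → ℝ) :=
  Set.univ.pi fun _ : Fin n => Set.Ico (0 : ℝ) (2 * π)

/-- `2π`-periodicity in each coordinate. -/
def TorusPeriodic {n : ℕ} {E : Type*} (u : (Fin n → ℝ) → E) : Prop :=
  ∀ (x : Fin n → ℝ) (i : Fin n), u (x + Pi.single i (2 * π)) = u x


-- Parseval for continuous maps on AddCircle
lemma parseval_cont {T : ℝ} [hT : Fact (0 < T)] (G : C(AddCircle T, ℂ)) :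
    Summable (fun n : ℤ => ‖fourierCoeff (⇑G) n‖ ^ 2) ∧
    ∑' n : ℤ, ‖fourierCoeff (⇑G) n‖ ^ 2 = ∫ t, ‖G t‖ ^ 2 ∂AddCircle.haarAddCircle := by
  have h1 : ∀ n, fourierCoeff (⇑(ContinuousMap.toLp (E := ℂ) 2 AddCircle.haarAddCircle ℂ G)) n
      = fourierCoeff (⇑G) n := fourierCoeff_toLp G
  constructor
  · have hm := lp.memℓp (fourierBasis.repr (ContinuousMap.toLp (E := ℂ) 2 AddCircle.haarAddCircle ℂ G))
    have hs := hm.summable (by norm_num)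
    simp only [fourierBasis_repr, h1] at hs
    convert hs using 2 with n
    norm_num
  · rw [← funext h1, tsum_sq_fourierCoeff]
    refine integral_congr_ae ?_
    filter_upwards [ContinuousMap.coeFn_toLp (E := ℂ) (𝕜 := ℂ) (p := 2) (μ := AddCircle.haarAddCircle) G] with t ht
    rw [ht]

lemma wirtinger_1d (f f' : ℝ → ℝ)
    (hd : ∀ t, HasDerivAt f (f' t) t) (hc' : Continuous f')
    (hper : ∀ t : ℝ, f (t + 2 * π) = f t)
    (hmean : ∫ t in (0:ℝ)..(2 * π), f t = 0) :
    ∫ t in (0:ℝ)..(2 * π), f t ^ 2 ≤ ∫ t in (0:ℝ)..(2 * π), f' t ^ 2 := by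
  have hTpos : (0:ℝ) < 2 * π := by positivity
  haveI hT : Fact ((0:ℝ) < 2 * π) := ⟨hTpos⟩
  have hc : Continuous f := by
    rw [continuous_iff_continuousAt]; exact fun t => (hd t).continuousAt
  set F : ℝ → ℂ := fun t => (f t : ℂ) with hF
  set F' : ℝ → ℂ := fun t => (f' t : ℂ) with hF'
  have hFc : Continuous F := Complex.continuous_ofReal.comp hc
  have hF'c : Continuous F' := Complex.continuous_ofReal.comp hc'
  have hab : (0:ℝ) < 0 + 2 * π := by linarith
  -- the two continuous lifts
  have hper' : ∀ t : ℝ, f' (t + 2 * π) = f' t := by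
    intro t
    have h1 : HasDerivAt f (f' (t + 2 * π)) t := by
      have h0 := (hd (t + 2 * π)).comp t ((hasDerivAt_id t).add_const (2 * π))
      simp only [mul_one] at h0
      have hfun : (f ∘ fun x => id x + 2 * π) = f := funext fun s => hper s
      rwa [hfun] at h0
    exact (h1.unique (hd t))
  have hGluef : F 0 = F (2 * π) := by simp only [hF]; rw [← hper 0]; norm_num
  have hGluef' : F' 0 = F' (2 * π) := by simp only [hF']; rw [← hper' 0]; norm_num
  set G : C(AddCircle (2 * π), ℂ) :=
    ⟨AddCircle.liftIco (2 * π) 0 F, AddCircle.liftIco_zero_continuous hGluef hFc.continuousOn⟩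
      with hG
  set G' : C(AddCircle (2 * π), ℂ) :=
    ⟨AddCircle.liftIco (2 * π) 0 F', AddCircle.liftIco_zero_continuous hGluef' hF'c.continuousOn⟩
      with hG'
  have hcoef : ∀ n : ℤ, fourierCoeff (⇑G) n = fourierCoeffOn hab F n := fun n =>
    fourierCoeff_liftIco_eq F n
  have hcoef' : ∀ n : ℤ, fourierCoeff (⇑G') n = fourierCoeffOn hab F' n := fun n =>
    fourierCoeff_liftIco_eq F' n
  -- coefficient zero
  have hc0 : fourierCoeffOn hab F 0 = 0 := by
    rw [fourierCoeffOn_eq_integral]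
    simp only [neg_zero, fourier_zero, one_smul, zero_add, smul_eq_mul, one_mul, hF]
    rw [intervalIntegral.integral_ofReal, hmean]
    simp
  -- coefficient comparison
  have hle : ∀ n : ℤ, ‖fourierCoeffOn hab F n‖ ≤ ‖fourierCoeffOn hab F' n‖ := by
    intro n
    rcases eq_or_ne n 0 with rfl | hn
    · rw [hc0]; simp
    · have hrel := fourierCoeffOn_of_hasDerivAt hab hn
        (fun x _ => (hd x).ofReal_comp) ((hF'c.intervalIntegrable) 0 (0 + 2 * π))
      have hFF : F (0 + 2 * π) - F 0 = 0 := by rw [zero_add, ← hGluef]; simp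
      rw [hFF, mul_zero, zero_sub] at hrel
      rw [hrel]
      rw [norm_mul, norm_neg, norm_mul]
      have h2 : ‖(1:ℂ) / (-2 * π * Complex.I * n)‖ = 1 / (2 * π * |(n:ℝ)|) := by
        rw [norm_div, norm_one]
        simp [abs_of_pos Real.pi_pos]
      have h3 : ‖(((0:ℝ) + 2 * π : ℝ) : ℂ) - ((0:ℝ) : ℂ)‖ = 2 * π := by
        norm_num [abs_of_pos Real.pi_pos]
      rw [h2, h3]
      have hn1 : (1:ℝ) ≤ |(n:ℝ)| := by
        rw [← Int.cast_abs]
        exact_mod_cast Int.one_le_abs hn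
      have hpos : (0:ℝ) < 2 * π * |(n:ℝ)| := by positivity
      rw [div_mul_eq_mul_div, one_mul, ← hF']
      rw [div_le_iff₀ hpos]
      nlinarith [norm_nonneg (fourierCoeffOn hab F' n), Real.pi_pos,
        mul_le_mul_of_nonneg_left hn1 (mul_nonneg (mul_nonneg (by norm_num : (0:ℝ) ≤ 2)
          Real.pi_pos.le) (norm_nonneg (fourierCoeffOn hab F' n)))]
  -- assemble via Parseval
  have key : ∀ (H : C(AddCircle (2 * π), ℂ)), ∫ b, ‖H b‖ ^ 2 ∂AddCircle.haarAddCircle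
      = (1 / (2 * π)) * ∫ t in (0:ℝ)..(2 * π), ‖H (t : AddCircle (2 * π))‖ ^ 2 := by
    intro H
    have h1 := AddCircle.intervalIntegral_preimage (T := 2 * π) 0
      (fun b => ‖H b‖ ^ 2)
    rw [zero_add] at h1
    have h2 : ∫ b, ‖H b‖ ^ 2 = (2 * π) * ∫ b, ‖H b‖ ^ 2 ∂AddCircle.haarAddCircle := by
      rw [AddCircle.volume_eq_smul_haarAddCircle, integral_smul_measure]
      rw [ENNReal.toReal_ofReal hTpos.le, smul_eq_mul]
    rw [h1, h2]
    field_simp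
  have PG := parseval_cont G
  have PG' := parseval_cont G'
  have hsum_le : ∑' n : ℤ, ‖fourierCoeff (⇑G) n‖ ^ 2 ≤ ∑' n : ℤ, ‖fourierCoeff (⇑G') n‖ ^ 2 :=
    Summable.tsum_le_tsum (fun n => by
      rw [hcoef, hcoef']
      exact pow_le_pow_left₀ (norm_nonneg _) (hle n) 2) PG.1 PG'.1
  have hintG : ∫ t in (0:ℝ)..(2 * π), ‖G (t : AddCircle (2 * π))‖ ^ 2
      = ∫ t in (0:ℝ)..(2 * π), f t ^ 2 := by
    rw [intervalIntegral.integral_of_le hTpos.le, intervalIntegral.integral_of_le hTpos.le]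
    rw [integral_Ioc_eq_integral_Ioo, integral_Ioc_eq_integral_Ioo]
    refine setIntegral_congr_fun measurableSet_Ioo fun t ht => ?_
    have htm : t ∈ Ico (0:ℝ) (0 + 2 * π) := by
      rw [zero_add]; exact ⟨le_of_lt ht.1, ht.2⟩
    have : G (t : AddCircle (2 * π)) = F t := by
      rw [hG]; simpa using AddCircle.liftIco_coe_apply (f := F) htm
    rw [this, hF]
    simp [Complex.norm_real, sq_abs]
  have hintG' : ∫ t in (0:ℝ)..(2 * π), ‖G' (t : AddCircle (2 * π))‖ ^ 2
      = ∫ t in (0:ℝ)..(2 * π), f' t ^ 2 := by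
    rw [intervalIntegral.integral_of_le hTpos.le, intervalIntegral.integral_of_le hTpos.le]
    rw [integral_Ioc_eq_integral_Ioo, integral_Ioc_eq_integral_Ioo]
    refine setIntegral_congr_fun measurableSet_Ioo fun t ht => ?_
    have htm : t ∈ Ico (0:ℝ) (0 + 2 * π) := by
      rw [zero_add]; exact ⟨le_of_lt ht.1, ht.2⟩
    have : G' (t : AddCircle (2 * π)) = F' t := by
      rw [hG']; simpa using AddCircle.liftIco_coe_apply (f := F') htm
    rw [this, hF']
    simp [Complex.norm_real, sq_abs]
  have hfinal : (1 / (2 * π)) * ∫ t in (0:ℝ)..(2 * π), f t ^ 2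
      ≤ (1 / (2 * π)) * ∫ t in (0:ℝ)..(2 * π), f' t ^ 2 := by
    rw [← hintG, ← hintG', ← key G, ← key G', ← PG.2, ← PG'.2]
    exact hsum_le
  have h2pi : (0:ℝ) < 1 / (2 * π) := by positivity
  exact le_of_mul_le_mul_left (by linarith [hfinal]) h2pi

lemma cons_mem_torusBox {n : ℕ} {t : ℝ} {y : Fin n → ℝ} :
    Fin.cons t y ∈ torusBox (n + 1) ↔ t ∈ Set.Ico (0:ℝ) (2 * π) ∧ y ∈ torusBox n := by
  constructor
  · intro h
    refine ⟨by simpa using h 0 (mem_univ _), fun j _ => by simpa using h j.succ (mem_univ _)⟩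
  · rintro ⟨h1, h2⟩ j _
    induction j using Fin.cases with
    | zero => simpa using h1
    | succ i => simpa using h2 i (mem_univ _)

lemma measurableSet_torusBox {n : ℕ} : MeasurableSet (torusBox n) :=
  MeasurableSet.univ_pi fun _ => measurableSet_Ico

lemma torusBox_subset_Icc {n : ℕ} :
    torusBox n ⊆ Set.univ.pi fun _ : Fin n => Set.Icc (0:ℝ) (2 * π) :=
  Set.pi_mono fun _ _ => Ico_subset_Icc_self

lemma integrableOn_torusBox {n : ℕ} {φ : (Fin n → ℝ) → ℝ} (hφ : Continuous φ) :
    IntegrableOn φ (torusBox n) := by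
  have hK : IsCompact (Set.univ.pi fun _ : Fin n => Set.Icc (0:ℝ) (2 * π)) :=
    isCompact_univ_pi fun _ => isCompact_Icc
  exact (hφ.continuousOn.integrableOn_compact hK).mono_set torusBox_subset_Icc

lemma continuous_finCons {n : ℕ} :
    Continuous fun p : ℝ × (Fin n → ℝ) => (Fin.cons p.1 p.2 : Fin (n+1) → ℝ) := by
  refine continuous_pi fun j => ?_
  induction j using Fin.cases with
  | zero => simpa using continuous_fst
  | succ i => simpa [Function.comp_def] using (continuous_apply i).comp continuous_snd

lemma integrableOn_prodBox {n : ℕ} {ψ : ℝ × (Fin n → ℝ) → ℝ} (hψ : Continuous ψ) :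
    IntegrableOn ψ (Set.Ico (0:ℝ) (2 * π) ×ˢ torusBox n) := by
  have hK : IsCompact ((Set.Icc (0:ℝ) (2*π)) ×ˢ Set.univ.pi fun _ : Fin n => Set.Icc (0:ℝ) (2 * π)) :=
    isCompact_Icc.prod (isCompact_univ_pi fun _ => isCompact_Icc)
  exact (hψ.continuousOn.integrableOn_compact hK).mono_set
    (Set.prod_mono Ico_subset_Icc_self torusBox_subset_Icc)

lemma box_fubini {n : ℕ} (φ : (Fin (n+1) → ℝ) → ℝ) (hφ : Continuous φ) :
    ∫ x in torusBox (n+1), φ x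
      = ∫ y in torusBox n, ∫ t in Set.Ico (0:ℝ) (2 * π), φ (Fin.cons t y) := by
  have hmp := (volume_preserving_piFinSuccAbove (fun _ : Fin (n+1) => ℝ) 0).symm _
  set e := (MeasurableEquiv.piFinSuccAbove (fun _ : Fin (n+1) => ℝ) 0).symm with he
  have hea : ∀ p : ℝ × (Fin n → ℝ), e p = Fin.cons p.1 p.2 := by
    intro p
    simp [he, MeasurableEquiv.piFinSuccAbove_symm_apply, Fin.insertNthEquiv, Fin.insertNth_zero]
  have hpre : e ⁻¹' torusBox (n+1) = Set.Ico (0:ℝ) (2 * π) ×ˢ torusBox n := by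
    ext p
    simp only [mem_preimage, hea, Set.mem_prod]
    exact cons_mem_torusBox
  have h1 := hmp.setIntegral_preimage_emb (MeasurableEquiv.measurableEmbedding _)
    φ (torusBox (n+1))
  rw [← h1, hpre]
  have h2 : ∫ p in Set.Ico (0:ℝ) (2 * π) ×ˢ torusBox n, φ (e p)
      = ∫ p in Set.Ico (0:ℝ) (2 * π) ×ˢ torusBox n, φ (Fin.cons p.1 p.2) := by
    exact setIntegral_congr_fun ((measurableSet_Ico).prod measurableSet_torusBox)
      fun p _ => by rw [hea]
  rw [h2]
  have hint : IntegrableOn (fun p : ℝ × (Fin n → ℝ) => φ (Fin.cons p.1 p.2))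
      (Set.Ico (0:ℝ) (2 * π) ×ˢ torusBox n) := integrableOn_prodBox (hφ.comp continuous_finCons)
  have hint2 : Integrable (fun p : ℝ × (Fin n → ℝ) => φ (Fin.cons p.1 p.2))
      ((volume.restrict (Set.Ico (0:ℝ) (2 * π))).prod (volume.restrict (torusBox n))) := by
    rw [Measure.prod_restrict]
    exact hint
  calc ∫ p in Set.Ico (0:ℝ) (2 * π) ×ˢ torusBox n, φ (Fin.cons p.1 p.2)
      = ∫ p, φ (Fin.cons p.1 p.2)
          ∂((volume.restrict (Set.Ico (0:ℝ) (2 * π))).prod (volume.restrict (torusBox n))) := by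
        rw [Measure.prod_restrict, ← Measure.volume_eq_prod]
    _ = ∫ y in torusBox n, ∫ t in Set.Ico (0:ℝ) (2 * π), φ (Fin.cons t y) :=
        integral_prod_symm _ hint2

lemma continuous_param_integral {n : ℕ} {φ : ℝ × (Fin n → ℝ) → ℝ} (hφ : Continuous φ) :
    Continuous fun y : Fin n → ℝ => ∫ t in Set.Ico (0:ℝ) (2 * π), φ (t, y) := by
  have h1 : (fun y : Fin n → ℝ => ∫ t in Set.Ico (0:ℝ) (2 * π), φ (t, y))
      = fun y => ∫ t in Set.Icc (0:ℝ) (2 * π), φ (t, y) := by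
    funext y
    rw [integral_Icc_eq_integral_Ioo, integral_Ico_eq_integral_Ioo]
  rw [h1]
  exact continuous_parametric_integral_of_continuous
    (f := fun (y : Fin n → ℝ) (t : ℝ) => φ (t, y)) (by exact hφ.comp continuous_swap) isCompact_Icc

lemma integrableOn_Ico_of_continuous {u : ℝ → ℝ} (hu : Continuous u) :
    IntegrableOn u (Set.Ico (0:ℝ) (2 * π)) :=
  (hu.continuousOn.integrableOn_compact isCompact_Icc).mono_set Ico_subset_Icc_self

lemma sq_setIntegral_le {u : ℝ → ℝ} (hu : Continuous u) :
    (∫ t in Set.Ico (0:ℝ) (2 * π), u t) ^ 2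
      ≤ (2 * π) * ∫ t in Set.Ico (0:ℝ) (2 * π), u t ^ 2 := by
  have hπ : (0:ℝ) < 2 * π := by positivity
  set c : ℝ := (∫ t in Set.Ico (0:ℝ) (2 * π), u t) / (2 * π) with hc
  have hu1 : IntegrableOn u (Set.Ico (0:ℝ) (2 * π)) := integrableOn_Ico_of_continuous hu
  have hu2 : IntegrableOn (fun t => u t ^ 2) (Set.Ico (0:ℝ) (2 * π)) :=
    integrableOn_Ico_of_continuous (hu.pow 2)
  have h0 : 0 ≤ ∫ t in Set.Ico (0:ℝ) (2 * π), (u t - c) ^ 2 :=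
    setIntegral_nonneg measurableSet_Ico fun t _ => sq_nonneg _
  have hexp : ∫ t in Set.Ico (0:ℝ) (2 * π), (u t - c) ^ 2
      = (∫ t in Set.Ico (0:ℝ) (2 * π), u t ^ 2)
        - 2 * c * (∫ t in Set.Ico (0:ℝ) (2 * π), u t) + (2 * π) * c ^ 2 := by
    have hr : ∀ t, (u t - c) ^ 2 = (u t ^ 2 - (2 * c) * u t) + c ^ 2 := fun t => by ring
    simp_rw [hr]
    have hsub : IntegrableOn (fun t => u t ^ 2 - 2 * c * u t) (Set.Ico (0:ℝ) (2 * π)) := by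
      exact hu2.sub (hu1.const_mul (2 * c))
    have hcst : IntegrableOn (fun _ : ℝ => c ^ 2) (Set.Ico (0:ℝ) (2 * π)) :=
      integrableOn_const (by rw [Real.volume_Ico]; exact ENNReal.ofReal_ne_top)
    rw [integral_add hsub hcst]
    have hmul : IntegrableOn (fun t => 2 * c * u t) (Set.Ico (0:ℝ) (2 * π)) := by
      exact hu1.const_mul (2 * c)
    rw [integral_sub hu2 hmul, MeasureTheory.integral_const_mul, setIntegral_const]
    rw [measureReal_def, Real.volume_Ico]
    simp only [sub_zero, ENNReal.toReal_ofReal hπ.le, smul_eq_mul]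
    try ring
  rw [hexp] at h0
  rw [hc] at h0
  set A : ℝ := ∫ t in Set.Ico (0:ℝ) (2 * π), u t
  set B : ℝ := ∫ t in Set.Ico (0:ℝ) (2 * π), u t ^ 2
  have h1 : 0 ≤ B - A ^ 2 / (2 * π) := by
    have : B - 2 * (A / (2 * π)) * A + 2 * π * (A / (2 * π)) ^ 2 = B - A ^ 2 / (2 * π) := by
      field_simp; ring
    linarith [this ▸ h0]
  calc A ^ 2 = (2 * π) * (A ^ 2 / (2 * π)) := by field_simp
    _ ≤ (2 * π) * B := by nlinarith

lemma cons_add_single_succ {n : ℕ} (t c : ℝ) (y : Fin n → ℝ) (i : Fin n) :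
    (Fin.cons t (y + Pi.single i c) : Fin (n+1) → ℝ) = Fin.cons t y + Pi.single i.succ c := by
  funext j
  induction j using Fin.cases with
  | zero => simp [Pi.single_apply, (Fin.succ_ne_zero i).symm]
  | succ k => simp [Pi.single_apply, Fin.succ_inj]

lemma cons_add_single_zero {n : ℕ} (t c : ℝ) (y : Fin n → ℝ) :
    (Fin.cons (t + c) y : Fin (n+1) → ℝ) = Fin.cons t y + Pi.single 0 c := by
  funext j
  induction j using Fin.cases with
  | zero => simp
  | succ k => simp [Pi.single_apply, Fin.succ_ne_zero k]

lemma continuous_update_const {n : ℕ} (y : Fin n → ℝ) (i : Fin n) :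
    Continuous fun s : ℝ => Function.update y i s := by
  refine continuous_pi fun j => ?_
  rcases eq_or_ne j i with rfl | h
  · simpa [Function.update_self] using continuous_id'
  · simpa [Function.update_of_ne h] using (continuous_const : Continuous fun _ : ℝ => y j)

lemma wirtinger_1d' (f f' : ℝ → ℝ) (hd : ∀ t, HasDerivAt f (f' t) t) (hc' : Continuous f')
    (hper : ∀ t : ℝ, f (t + 2 * π) = f t)
    (hmean : ∫ t in Set.Ico (0:ℝ) (2 * π), f t = 0) :
    ∫ t in Set.Ico (0:ℝ) (2 * π), f t ^ 2 ≤ ∫ t in Set.Ico (0:ℝ) (2 * π), f' t ^ 2 := by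
  have hπ : (0:ℝ) < 2 * π := by positivity
  have h1 : ∫ t in (0:ℝ)..(2 * π), f t = 0 := by
    rw [intervalIntegral.integral_of_le hπ.le, integral_Ioc_eq_integral_Ioo,
      ← integral_Ico_eq_integral_Ioo]
    exact hmean
  have h2 := wirtinger_1d f f' hd hc' hper h1
  rw [intervalIntegral.integral_of_le hπ.le, intervalIntegral.integral_of_le hπ.le,
    integral_Ioc_eq_integral_Ioo, integral_Ioc_eq_integral_Ioo] at h2
  rw [integral_Ico_eq_integral_Ioo, integral_Ico_eq_integral_Ioo]
  exact h2

theorem key_ind : ∀ (n : ℕ) (g : (Fin n → ℝ) → ℝ) (G : (Fin n → ℝ) → Fin n → ℝ),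
    Continuous g → Continuous G →
    (∀ (x : Fin n → ℝ) (i : Fin n),
      HasDerivAt (fun t => g (Function.update x i t)) (G x i) (x i)) →
    TorusPeriodic g → (∫ x in torusBox n, g x) = 0 →
    (∫ x in torusBox n, g x ^ 2) ≤ ∫ x in torusBox n, ∑ i, (G x i) ^ 2 := by
  intro n
  induction n with
  | zero =>
    intro g G hg hG hd hper hmean
    have hconst : ∀ x : Fin 0 → ℝ, g x = g default := fun x => by
      congr 1; exact Subsingleton.elim x default
    have h1 : ∫ x in torusBox 0, g x
        = (volume (torusBox 0)).toReal • g default := by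
      rw [show (fun x : Fin 0 → ℝ => g x) = fun _ => g default from funext hconst]
      exact setIntegral_const _
    have h2 : ∫ x in torusBox 0, g x ^ 2
        = (volume (torusBox 0)).toReal • (g default) ^ 2 := by
      rw [show (fun x : Fin 0 → ℝ => g x ^ 2) = fun _ => g default ^ 2 from
        funext fun x => by rw [hconst x]]
      exact setIntegral_const _
    rw [h1] at hmean
    have h3 : (volume (torusBox 0)).toReal • (g default) ^ 2 = 0 := by
      rcases mul_eq_zero.1 hmean with h | h
      · rw [smul_eq_mul, h, zero_mul]
      · rw [smul_eq_mul, sq, h, mul_zero, mul_zero]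
    rw [h2, h3]
    exact setIntegral_nonneg measurableSet_torusBox fun x _ =>
      Finset.sum_nonneg fun i _ => sq_nonneg _
  | succ n ih =>
    intro g G hg hG hd hper hmean
    have hπ : (0:ℝ) < 2 * π := by positivity
    set gbar : (Fin n → ℝ) → ℝ :=
      fun y => (1 / (2 * π)) * ∫ t in Set.Ico (0:ℝ) (2 * π), g (Fin.cons t y) with hgbar
    set Gbar : (Fin n → ℝ) → Fin n → ℝ :=
      fun y i => (1 / (2 * π)) * ∫ t in Set.Ico (0:ℝ) (2 * π), G (Fin.cons t y) i.succ
        with hGbar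
    have hgbarc : Continuous gbar := by
      exact continuous_const.mul (continuous_param_integral
        (φ := fun p : ℝ × (Fin n → ℝ) => g (Fin.cons p.1 p.2)) (hg.comp continuous_finCons))
    have hGbarc : Continuous Gbar := by
      refine continuous_pi fun i => ?_
      exact continuous_const.mul (continuous_param_integral
        (φ := fun p : ℝ × (Fin n → ℝ) => G (Fin.cons p.1 p.2) i.succ)
        (((continuous_apply i.succ).comp hG).comp continuous_finCons))
    -- differentiation under the integral sign
    have hdbar : ∀ (y : Fin n → ℝ) (i : Fin n),
        HasDerivAt (fun s => gbar (Function.update y i s)) (Gbar y i) (y i) := by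
      intro y i
      have hK : IsCompact ((Set.Icc (0:ℝ) (2 * π)) ×ˢ Metric.closedBall (y i) 1) :=
        isCompact_Icc.prod (isCompact_closedBall _ _)
      have hcont2 : Continuous fun p : ℝ × ℝ =>
          G (Fin.cons p.1 (Function.update y i p.2)) i.succ := by
        refine ((continuous_apply i.succ).comp hG).comp ?_
        exact continuous_finCons.comp
          (continuous_fst.prodMk ((continuous_update_const y i).comp continuous_snd))
      obtain ⟨C, hC⟩ := hK.exists_bound_of_continuousOn hcont2.continuousOn
      have hcontF : ∀ s : ℝ, Continuous fun t => g (Fin.cons t (Function.update y i s)) :=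
        fun s => hg.comp (continuous_finCons.comp (continuous_id.prodMk continuous_const))
      have hcontF' : ∀ s : ℝ, Continuous fun t =>
          G (Fin.cons t (Function.update y i s)) i.succ :=
        fun s => ((continuous_apply i.succ).comp hG).comp
          (continuous_finCons.comp (continuous_id.prodMk continuous_const))
      have hFint : Integrable (fun t => g (Fin.cons t (Function.update y i (y i))))
          (volume.restrict (Set.Ico (0:ℝ) (2 * π))) :=
        integrableOn_Ico_of_continuous (hcontF (y i))
      have hbint : Integrable (fun _ : ℝ => |C|)
          (volume.restrict (Set.Ico (0:ℝ) (2 * π))) :=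
        integrableOn_const (by rw [Real.volume_Ico]; exact ENNReal.ofReal_ne_top)
      have hmain := hasDerivAt_integral_of_dominated_loc_of_deriv_le
        (μ := volume.restrict (Set.Ico (0:ℝ) (2 * π)))
        (F := fun s t => g (Fin.cons t (Function.update y i s)))
        (F' := fun s t => G (Fin.cons t (Function.update y i s)) i.succ)
        (x₀ := y i) (bound := fun _ => |C|) (Metric.ball_mem_nhds (y i) one_pos)
        (Filter.Eventually.of_forall fun s => (hcontF s).aestronglyMeasurable)
        hFint
        ((hcontF' (y i)).aestronglyMeasurable)
        (by
          filter_upwards [ae_restrict_mem measurableSet_Ico] with t ht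
          intro s hs
          exact (hC (t, s) ⟨Ico_subset_Icc_self ht,
            Metric.ball_subset_closedBall hs⟩).trans (le_abs_self C))
        hbint
        (by
          filter_upwards [ae_restrict_mem measurableSet_Ico] with t _
          intro s _
          have h := hd (Function.update (Fin.cons t y) i.succ s) i.succ
          simp only [Function.update_idem, Function.update_self] at h
          simp only [← Fin.cons_update] at h
          exact h)
      have heq : (fun s => gbar (Function.update y i s))
          = fun s => (1 / (2 * π)) *
            ∫ t in Set.Ico (0:ℝ) (2 * π), g (Fin.cons t (Function.update y i s)) := rfl
      rw [heq]
      have h2 := hmain.2.const_mul (1 / (2 * π))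
      have h3 : (∫ t in Set.Ico (0:ℝ) (2 * π),
          G (Fin.cons t (Function.update y i (y i))) i.succ)
          = ∫ t in Set.Ico (0:ℝ) (2 * π), G (Fin.cons t y) i.succ := by
        rw [Function.update_eq_self]
      rw [h3] at h2
      exact h2
    -- periodicity of the average
    have hperbar : TorusPeriodic gbar := by
      intro y i
      simp only [hgbar]
      congr 1
      refine setIntegral_congr_fun measurableSet_Ico fun t _ => ?_
      rw [cons_add_single_succ, hper]
    -- zero mean of the average
    have hmeanbar : (∫ y in torusBox n, gbar y) = 0 := by
      have h1 : ∫ y in torusBox n, gbar y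
          = (1 / (2 * π)) * ∫ y in torusBox n,
              ∫ t in Set.Ico (0:ℝ) (2 * π), g (Fin.cons t y) := by
        simp only [hgbar]
        exact integral_const_mul _ _
      rw [h1, ← box_fubini g hg, hmean, mul_zero]
    have hconsy : ∀ y : Fin n → ℝ, Continuous fun t : ℝ => (Fin.cons t y : Fin (n+1) → ℝ) :=
      fun y => continuous_finCons.comp (continuous_id.prodMk continuous_const)
    have hmeas : (volume (Set.Ico (0:ℝ) (2 * π))).toReal = 2 * π := by
      rw [Real.volume_Ico, sub_zero, ENNReal.toReal_ofReal hπ.le]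
    have hintc : ∀ c : ℝ, IntegrableOn (fun _ : ℝ => c) (Set.Ico (0:ℝ) (2 * π)) := fun c =>
      integrableOn_const (by rw [Real.volume_Ico]; exact ENNReal.ofReal_ne_top)
    -- fiberwise 1-D Wirtinger
    have fiber : ∀ y : Fin n → ℝ,
        (∫ t in Set.Ico (0:ℝ) (2 * π), g (Fin.cons t y) ^ 2)
          ≤ (2 * π) * gbar y ^ 2
            + ∫ t in Set.Ico (0:ℝ) (2 * π), G (Fin.cons t y) 0 ^ 2 := by
      intro y
      set f : ℝ → ℝ := fun t => g (Fin.cons t y) - gbar y with hf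
      set f' : ℝ → ℝ := fun t => G (Fin.cons t y) 0 with hf'
      have hgc : Continuous fun t => g (Fin.cons t y) := hg.comp (hconsy y)
      have hfc' : Continuous f' := ((continuous_apply 0).comp hG).comp (hconsy y)
      have hd1 : ∀ t, HasDerivAt f (f' t) t := by
        intro t
        have h := hd (Fin.cons t y) 0
        simp only [Fin.update_cons_zero, Fin.cons_zero] at h
        exact h.sub_const _
      have hper1 : ∀ t : ℝ, f (t + 2 * π) = f t := by
        intro t
        simp only [hf]
        rw [cons_add_single_zero, hper]
      have hint1 : IntegrableOn (fun t => g (Fin.cons t y)) (Set.Ico (0:ℝ) (2 * π)) :=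
        integrableOn_Ico_of_continuous hgc
      have hgbary : ∫ t in Set.Ico (0:ℝ) (2 * π), g (Fin.cons t y) = (2 * π) * gbar y := by
        simp only [hgbar]
        field_simp
      have hmean1 : ∫ t in Set.Ico (0:ℝ) (2 * π), f t = 0 := by
        simp only [hf]
        rw [integral_sub hint1 (hintc (gbar y)), setIntegral_const, measureReal_def, hmeas, hgbary,
          smul_eq_mul]
        ring
      have h2 := wirtinger_1d' f f' hd1 hfc' hper1 hmean1
      have hexp : ∫ t in Set.Ico (0:ℝ) (2 * π), f t ^ 2
          = (∫ t in Set.Ico (0:ℝ) (2 * π), g (Fin.cons t y) ^ 2)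
            - (2 * π) * gbar y ^ 2 := by
        have hr : ∀ t, f t ^ 2 = (g (Fin.cons t y) ^ 2
            - (2 * gbar y) * g (Fin.cons t y)) + gbar y ^ 2 := fun t => by
          simp only [hf]; ring
        simp_rw [hr]
        have hint2 : IntegrableOn (fun t => g (Fin.cons t y) ^ 2)
            (Set.Ico (0:ℝ) (2 * π)) := integrableOn_Ico_of_continuous (hgc.pow 2)
        have hintm : IntegrableOn (fun t => (2 * gbar y) * g (Fin.cons t y))
            (Set.Ico (0:ℝ) (2 * π)) := by exact hint1.const_mul _
        have hsub : IntegrableOn (fun t => g (Fin.cons t y) ^ 2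
            - (2 * gbar y) * g (Fin.cons t y)) (Set.Ico (0:ℝ) (2 * π)) := by
          exact hint2.sub hintm
        rw [integral_add hsub (hintc (gbar y ^ 2)), integral_sub hint2 hintm,
          MeasureTheory.integral_const_mul, setIntegral_const, measureReal_def, hmeas, hgbary, smul_eq_mul]
        ring
      rw [hexp] at h2
      simp only [hf'] at h2
      linarith [h2]
    -- continuity of the fiber integrals
    have hχ1 : Continuous fun y : Fin n → ℝ =>
        ∫ t in Set.Ico (0:ℝ) (2 * π), g (Fin.cons t y) ^ 2 :=
      continuous_param_integral (φ := fun p : ℝ × (Fin n → ℝ) => g (Fin.cons p.1 p.2) ^ 2)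
        ((hg.comp continuous_finCons).pow 2)
    have hχ2 : Continuous fun y : Fin n → ℝ =>
        ∫ t in Set.Ico (0:ℝ) (2 * π), G (Fin.cons t y) 0 ^ 2 :=
      continuous_param_integral (φ := fun p : ℝ × (Fin n → ℝ) => G (Fin.cons p.1 p.2) 0 ^ 2)
        ((((continuous_apply 0).comp hG).comp continuous_finCons).pow 2)
    have hχ3 : Continuous fun y : Fin n → ℝ =>
        ∫ t in Set.Ico (0:ℝ) (2 * π), ∑ i : Fin n, G (Fin.cons t y) i.succ ^ 2 :=
      continuous_param_integral
        (φ := fun p : ℝ × (Fin n → ℝ) => ∑ i : Fin n, G (Fin.cons p.1 p.2) i.succ ^ 2)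
        (continuous_finset_sum _ fun i _ =>
          (((continuous_apply i.succ).comp hG).comp continuous_finCons).pow 2)
    -- step 1: integrate the fiber inequality
    have hmain1 : ∫ x in torusBox (n+1), g x ^ 2
        = ∫ y in torusBox n, ∫ t in Set.Ico (0:ℝ) (2 * π), g (Fin.cons t y) ^ 2 :=
      box_fubini _ (hg.pow 2)
    have hstep1 : (∫ y in torusBox n, ∫ t in Set.Ico (0:ℝ) (2 * π), g (Fin.cons t y) ^ 2)
        ≤ ∫ y in torusBox n, ((2 * π) * gbar y ^ 2
            + ∫ t in Set.Ico (0:ℝ) (2 * π), G (Fin.cons t y) 0 ^ 2) :=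
      setIntegral_mono_on (integrableOn_torusBox hχ1)
        (integrableOn_torusBox ((continuous_const.mul (hgbarc.pow 2)).add hχ2))
        measurableSet_torusBox fun y _ => fiber y
    have hsplit : (∫ y in torusBox n, ((2 * π) * gbar y ^ 2
          + ∫ t in Set.Ico (0:ℝ) (2 * π), G (Fin.cons t y) 0 ^ 2))
        = (2 * π) * (∫ y in torusBox n, gbar y ^ 2)
          + ∫ y in torusBox n, ∫ t in Set.Ico (0:ℝ) (2 * π), G (Fin.cons t y) 0 ^ 2 := by
      rw [integral_add (by exact integrableOn_torusBox (continuous_const.mul (hgbarc.pow 2)))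
        (integrableOn_torusBox hχ2), MeasureTheory.integral_const_mul]
    -- induction hypothesis
    have hih := ih gbar Gbar hgbarc hGbarc hdbar hperbar hmeanbar
    -- Cauchy–Schwarz on each Gbar coordinate
    have hpt : ∀ y : Fin n → ℝ, (∑ i : Fin n, Gbar y i ^ 2)
        ≤ (1 / (2 * π)) * ∫ t in Set.Ico (0:ℝ) (2 * π),
            ∑ i : Fin n, G (Fin.cons t y) i.succ ^ 2 := by
      intro y
      have hswap : (∫ t in Set.Ico (0:ℝ) (2 * π), ∑ i : Fin n, G (Fin.cons t y) i.succ ^ 2)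
          = ∑ i : Fin n, ∫ t in Set.Ico (0:ℝ) (2 * π), G (Fin.cons t y) i.succ ^ 2 :=
        integral_finset_sum _ fun i _ => integrableOn_Ico_of_continuous
          ((((continuous_apply i.succ).comp hG).comp (hconsy y)).pow 2)
      rw [hswap, Finset.mul_sum]
      refine Finset.sum_le_sum fun i _ => ?_
      have hcs := sq_setIntegral_le (u := fun t => G (Fin.cons t y) i.succ)
        (((continuous_apply i.succ).comp hG).comp (hconsy y))
      have he : Gbar y i ^ 2 = (1 / (2 * π)) ^ 2
          * (∫ t in Set.Ico (0:ℝ) (2 * π), G (Fin.cons t y) i.succ) ^ 2 := by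
        simp only [hGbar]; ring
      rw [he]
      calc (1 / (2 * π)) ^ 2
            * (∫ t in Set.Ico (0:ℝ) (2 * π), G (Fin.cons t y) i.succ) ^ 2
          ≤ (1 / (2 * π)) ^ 2 * ((2 * π)
            * ∫ t in Set.Ico (0:ℝ) (2 * π), G (Fin.cons t y) i.succ ^ 2) :=
            mul_le_mul_of_nonneg_left hcs (by positivity)
        _ = (1 / (2 * π)) * ∫ t in Set.Ico (0:ℝ) (2 * π), G (Fin.cons t y) i.succ ^ 2 := by
            field_simp
    have hstep2 : (∫ y in torusBox n, ∑ i : Fin n, Gbar y i ^ 2)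
        ≤ ∫ y in torusBox n, (1 / (2 * π)) * ∫ t in Set.Ico (0:ℝ) (2 * π),
            ∑ i : Fin n, G (Fin.cons t y) i.succ ^ 2 :=
      setIntegral_mono_on
        (integrableOn_torusBox (continuous_finset_sum _ fun i _ =>
          ((continuous_apply i).comp hGbarc).pow 2))
        (integrableOn_torusBox (continuous_const.mul hχ3))
        measurableSet_torusBox fun y _ => hpt y
    have hstep2' : (∫ y in torusBox n, (1 / (2 * π)) * ∫ t in Set.Ico (0:ℝ) (2 * π),
            ∑ i : Fin n, G (Fin.cons t y) i.succ ^ 2)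
        = (1 / (2 * π)) * ∫ y in torusBox n, ∫ t in Set.Ico (0:ℝ) (2 * π),
            ∑ i : Fin n, G (Fin.cons t y) i.succ ^ 2 := MeasureTheory.integral_const_mul _ _
    -- decompose the right-hand side
    have hmain3 : ∫ x in torusBox (n+1), ∑ i : Fin (n+1), G x i ^ 2
        = (∫ y in torusBox n, ∫ t in Set.Ico (0:ℝ) (2 * π), G (Fin.cons t y) 0 ^ 2)
          + ∫ y in torusBox n, ∫ t in Set.Ico (0:ℝ) (2 * π),
              ∑ i : Fin n, G (Fin.cons t y) i.succ ^ 2 := by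
      rw [box_fubini (fun x => ∑ i : Fin (n+1), G x i ^ 2)
        (by exact continuous_finset_sum _ fun i _ => ((continuous_apply i).comp hG).pow 2)]
      have hin : ∀ y : Fin n → ℝ, (∫ t in Set.Ico (0:ℝ) (2 * π),
          ∑ i : Fin (n+1), G (Fin.cons t y) i ^ 2)
          = (∫ t in Set.Ico (0:ℝ) (2 * π), G (Fin.cons t y) 0 ^ 2)
            + ∫ t in Set.Ico (0:ℝ) (2 * π), ∑ i : Fin n, G (Fin.cons t y) i.succ ^ 2 := by
        intro y
        have hr : ∀ t : ℝ, (∑ i : Fin (n+1), G (Fin.cons t y) i ^ 2)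
            = G (Fin.cons t y) 0 ^ 2 + ∑ i : Fin n, G (Fin.cons t y) i.succ ^ 2 := fun t =>
          Fin.sum_univ_succ _
        simp_rw [hr]
        have hi1 : IntegrableOn (fun t => G (Fin.cons t y) 0 ^ 2)
            (Set.Ico (0:ℝ) (2 * π)) := by
          exact integrableOn_Ico_of_continuous
            ((((continuous_apply 0).comp hG).comp (hconsy y)).pow 2)
        have hi2 : IntegrableOn (fun t => ∑ i : Fin n, G (Fin.cons t y) i.succ ^ 2)
            (Set.Ico (0:ℝ) (2 * π)) := by
          exact integrableOn_Ico_of_continuous (continuous_finset_sum _ fun i _ =>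
            (((continuous_apply i.succ).comp hG).comp (hconsy y)).pow 2)
        rw [integral_add hi1 hi2]
      rw [setIntegral_congr_fun measurableSet_torusBox fun y _ => hin y]
      rw [integral_add (integrableOn_torusBox hχ2) (integrableOn_torusBox hχ3)]
    -- put everything together
    have h2π : (0:ℝ) < 2 * π := hπ
    have hfin : (2 * π) * (∫ y in torusBox n, gbar y ^ 2)
        ≤ ∫ y in torusBox n, ∫ t in Set.Ico (0:ℝ) (2 * π),
            ∑ i : Fin n, G (Fin.cons t y) i.succ ^ 2 := by
      have := mul_le_mul_of_nonneg_left (hih.trans (hstep2.trans_eq hstep2')) h2π.le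
      calc (2 * π) * (∫ y in torusBox n, gbar y ^ 2)
          ≤ (2 * π) * ((1 / (2 * π)) * ∫ y in torusBox n, ∫ t in Set.Ico (0:ℝ) (2 * π),
              ∑ i : Fin n, G (Fin.cons t y) i.succ ^ 2) := this
        _ = ∫ y in torusBox n, ∫ t in Set.Ico (0:ℝ) (2 * π),
              ∑ i : Fin n, G (Fin.cons t y) i.succ ^ 2 := by
            field_simp
    rw [hmain1, hmain3]
    linarith [hstep1, hsplit, hfin]

/-- (Poincaré--Wirtinger inequality on the torus with
constant 1.) A continuously differentiable `2π`-periodic function `g` of zero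
mean satisfies `∫_{[0,2π)ⁿ} g² dx ≤ ∫_{[0,2π)ⁿ} |∇g|² dx`. -/
theorem poincare_wirtinger_torus {n : ℕ} (hn : 1 ≤ n)
    (g : (Fin n → ℝ) → ℝ) (hg : ContDiff ℝ 1 g) (hgper : TorusPeriodic g)
    (hmean : (∫ x in torusBox n, g x) = 0) :
    (∫ x in torusBox n, (g x) ^ 2)
      ≤ ∫ x in torusBox n, ∑ i, (fderiv ℝ g x (Pi.single i 1)) ^ 2 := by
  have hdiff : Differentiable ℝ g := hg.differentiable one_ne_zero
  have hfc : Continuous fun x => fderiv ℝ g x := hg.continuous_fderiv one_ne_zero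
  refine key_ind n g (fun x i => fderiv ℝ g x (Pi.single i 1)) hg.continuous ?_ ?_ hgper hmean
  · exact continuous_pi fun i => hfc.clm_apply continuous_const
  · intro x i
    have hL : HasDerivAt (fun t : ℝ => Function.update x i t)
        (Pi.single i (1:ℝ)) (x i) := by
      rw [hasDerivAt_pi]
      intro j
      rcases eq_or_ne j i with rfl | h
      · simpa [Function.update_self] using (hasDerivAt_id' (x j))
      · simpa [Function.update_of_ne h, Pi.single_apply, h] using
          (hasDerivAt_const (x i) (x j))
    have hf : HasFDerivAt g (fderiv ℝ g x) (Function.update x i (x i)) := by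
      rw [Function.update_eq_self]
      exact (hdiff x).hasFDerivAt
    have := hf.comp_hasDerivAt (x i) hL
    simpa [Function.comp_def] using this
end
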